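/- Let H₀ be a bounded self-adjoint operator on a complex Hilbert space 𝓗, F : 𝓗 →L[ℂ] 𝓚 a compact operator into a complex Hilbert space 𝓚, and λ ∈ ℝ. If λ is semi-regular for H₀ with respect to F (i.e., there exist a bounded self-adjoint operator J on 𝓚 and r ∈ ℝ such that the norm limit T_{λ+i0}(H₀ + r F* J F) exists), then the direction F*F is λ-regular for H₀, i.e., there exists r ∈ ℝ such that the norm limit T_{λ+i0}(H₀ + r F* F) exists. -/

import Mathlib

open ContinuousLinearMap Filter Complex Set Topology

variable {𝓗 𝓚 : Type*} [NormedAddCommGroup 𝓗] [InnerProductSpace ℂ 𝓗] [CompleteSpace 𝓗]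
  [NormedAddCommGroup 𝓚] [InnerProductSpace ℂ 𝓚] [CompleteSpace 𝓚]

/-- `Tz F A z = F (A - z)⁻¹ F*`, using `Ring.inverse` (which is the genuine inverse when
`A - z•1` is invertible, as is the case for self-adjoint `A` and nonreal `z`). -/
noncomputable def Tz (F : 𝓗 →L[ℂ] 𝓚) (A : 𝓗 →L[ℂ] 𝓗) (z : ℂ) : 𝓚 →L[ℂ] 𝓚 :=
  F ∘L (Ring.inverse (A - z • (1 : 𝓗 →L[ℂ] 𝓗))) ∘L (adjoint F)

/-- The norm limit `T_{λ+i0}(A)` exists: there is a bounded operator `T` on `𝓚` such that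
`T_{λ+iy}(A) → T` in operator norm as `y → 0⁺`. -/
def NormLimitExists (F : 𝓗 →L[ℂ] 𝓚) (A : 𝓗 →L[ℂ] 𝓗) (lam : ℝ) : Prop :=
  ∃ T : 𝓚 →L[ℂ] 𝓚,
    Tendsto (fun y : ℝ => Tz F A ((lam : ℂ) + y * Complex.I)) (𝓝[>] 0) (𝓝 T)

lemma aux_sa_inner_im_zero {E : Type*} [NormedAddCommGroup E] [InnerProductSpace ℂ E]
    [CompleteSpace E] {A : E →L[ℂ] E} (hA : IsSelfAdjoint A) (x : E) :
    (inner ℂ (A x) x : ℂ).im = 0 := by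
  have h1 : (inner ℂ (A x) x : ℂ) = inner ℂ x (A x) := by
    conv_lhs => rw [← hA.adjoint_eq]
    exact ContinuousLinearMap.adjoint_inner_left A x x
  have h2 : (starRingEnd ℂ) (inner ℂ (A x) x : ℂ) = (inner ℂ (A x) x : ℂ) := by
    rw [inner_conj_symm]; exact h1.symm
  exact Complex.conj_eq_iff_im.mp h2


lemma aux_isUnit_sub {A : 𝓗 →L[ℂ] 𝓗} (hA : IsSelfAdjoint A) {z : ℂ} (hz : z.im ≠ 0) :
    IsUnit (A - z • (1 : 𝓗 →L[ℂ] 𝓗)) := by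
  have hnot : z ∉ spectrum ℂ A := fun h => hz (hA.im_eq_zero_of_mem_spectrum h)
  have := spectrum.notMem_iff.mp hnot
  rw [Algebra.algebraMap_eq_smul_one] at this
  simpa using this.neg


lemma aux_Tz_im_nonneg {A : 𝓗 →L[ℂ] 𝓗} (hA : IsSelfAdjoint A) (F : 𝓗 →L[ℂ] 𝓚) {z : ℂ}
    (hz : 0 < z.im) (u : 𝓚) : 0 ≤ (inner ℂ u (Tz F A z u) : ℂ).im := by
  have hunit := aux_isUnit_sub hA (ne_of_gt hz)
  set R : 𝓗 →L[ℂ] 𝓗 := Ring.inverse (A - z • (1 : 𝓗 →L[ℂ] 𝓗)) with hRdef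
  have hR : ∀ v, (A - z • (1 : 𝓗 →L[ℂ] 𝓗)) (R v) = v := by
    intro v
    have h := Ring.mul_inverse_cancel _ hunit
    calc (A - z • (1 : 𝓗 →L[ℂ] 𝓗)) (R v)
        = ((A - z • (1 : 𝓗 →L[ℂ] 𝓗)) * R) v := rfl
      _ = v := by rw [h]; rfl
  set v : 𝓗 := (adjoint F) u with hv
  set w : 𝓗 := R v with hw
  have hT : Tz F A z u = F w := rfl
  have hvw : v = A w - z • w := by
    have h := hR v
    rw [ContinuousLinearMap.sub_apply, ContinuousLinearMap.smul_apply,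
      ContinuousLinearMap.one_apply] at h
    exact h.symm
  have h1 : (inner ℂ u (Tz F A z u) : ℂ) = inner ℂ v w := by
    rw [hT]
    exact (ContinuousLinearMap.adjoint_inner_left F w u).symm
  rw [h1, hvw]
  rw [inner_sub_left, inner_smul_left]
  have him := aux_sa_inner_im_zero hA w
  rw [Complex.sub_im, him, Complex.mul_im]
  have e1 : ((starRingEnd ℂ) z).re = z.re := rfl
  have e2 : ((starRingEnd ℂ) z).im = -z.im := rfl
  have e3 : (inner ℂ w w : ℂ).im = 0 := Complex.conj_eq_iff_im.mp (inner_conj_symm w w)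
  have e4 : (0:ℝ) ≤ (inner ℂ w w : ℂ).re := by
    rw [inner_self_eq_norm_sq_to_K]
    exact_mod_cast sq_nonneg ‖w‖
  rw [e1, e2, e3]
  nlinarith [hz, e4]


lemma aux_adjoint_apply_eq {T : 𝓚 →L[ℂ] 𝓚}
    (hpos : ∀ w : 𝓚, 0 ≤ (inner ℂ w (T w) : ℂ).im) {u : 𝓚}
    (hu : (inner ℂ u (T u) : ℂ).im = 0) : adjoint T u = T u := by
  set Q : 𝓚 →L[ℂ] 𝓚 := Complex.I • (adjoint T - T) with hQdef
  have hQsa : adjoint Q = Q := by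
    rw [← ContinuousLinearMap.star_eq_adjoint, hQdef, star_smul, star_sub,
      ContinuousLinearMap.star_eq_adjoint, ContinuousLinearMap.star_eq_adjoint,
      adjoint_adjoint]
    simp only [Complex.star_def, Complex.conj_I, neg_smul, smul_sub]
    abel
  have hq : ∀ w : 𝓚, (inner ℂ w (Q w) : ℂ) = (2 * (inner ℂ w (T w) : ℂ).im : ℝ) := by
    intro w
    have h1 : (inner ℂ w ((adjoint T) w) : ℂ) = (starRingEnd ℂ) (inner ℂ w (T w)) := by
      rw [adjoint_inner_right, ← inner_conj_symm]
    simp only [hQdef, ContinuousLinearMap.smul_apply, ContinuousLinearMap.sub_apply,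
      inner_smul_right, inner_sub_right, h1]
    set c : ℂ := inner ℂ w (T w) with hc
    apply Complex.ext <;>
      simp [Complex.mul_re, Complex.mul_im, Complex.sub_re, Complex.sub_im] <;> ring
  have hqre : ∀ w : 𝓚, 0 ≤ (inner ℂ w (Q w) : ℂ).re := by
    intro w; rw [hq]; simpa using mul_nonneg (by norm_num : (0:ℝ) ≤ 2) (hpos w)
  have huu : (inner ℂ u (Q u) : ℂ) = 0 := by rw [hq u, hu]; norm_num
  have hre : ∀ w : 𝓚, ((inner ℂ w (Q u) : ℂ)).re = 0 := by
    intro w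
    have hsym : (inner ℂ u (Q w) : ℂ) = (starRingEnd ℂ) (inner ℂ w (Q u)) := by
      rw [inner_conj_symm]
      conv_rhs => rw [← hQsa]
      rw [adjoint_inner_left]
    have key : ∀ t : ℝ, 0 ≤ ((inner ℂ w (Q w) : ℂ)).re * t ^ 2
        + 2 * ((inner ℂ w (Q u) : ℂ)).re * t := by
      intro t
      have h0 := hqre (u + (t : ℂ) • w)
      have hexp : (inner ℂ (u + (t : ℂ) • w) (Q (u + (t : ℂ) • w)) : ℂ) =
          inner ℂ u (Q u) + (t : ℂ) * inner ℂ u (Q w) + (t : ℂ) * inner ℂ w (Q u)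
            + (t : ℂ) ^ 2 * inner ℂ w (Q w) := by
        simp only [map_add, map_smul, inner_add_left, inner_add_right, inner_smul_left,
          inner_smul_right]
        rw [Complex.conj_ofReal]; ring
      rw [hexp, huu, hsym] at h0
      set c : ℂ := inner ℂ w (Q u)
      have heq : (0 + (t:ℂ) * (starRingEnd ℂ) c + (t:ℂ) * c + (t:ℂ)^2 * inner ℂ w (Q w)).re
          = (inner ℂ w (Q w) : ℂ).re * t^2 + 2 * c.re * t := by
        simp [Complex.add_re, Complex.mul_re, Complex.mul_im, pow_two]
        ring
      rw [heq] at h0; exact h0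
    set a := ((inner ℂ w (Q w) : ℂ)).re with hadef
    set b := 2 * ((inner ℂ w (Q u) : ℂ)).re with hbdef
    have ha : 0 ≤ a := hqre w
    have hb : b = 0 := by
      have h1 := key (-(b / (a + 1)))
      have hq1 : b = (b / (a + 1)) * (a + 1) := by field_simp
      set q := b / (a + 1) with hqdef
      rw [hq1] at h1
      have hq2 : q ^ 2 ≤ 0 := by nlinarith [sq_nonneg q]
      have : q = 0 := pow_eq_zero_iff (n := 2) (by norm_num) |>.mp
        (le_antisymm hq2 (sq_nonneg q))
      rw [hq1, this]; ring
    have := hb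
    rw [hbdef] at this; linarith
  have hzero : ∀ w : 𝓚, (inner ℂ w (Q u) : ℂ) = 0 := by
    intro w
    have h1 := hre w
    have h2 := hre ((Complex.I : ℂ) • w)
    rw [inner_smul_left] at h2
    simp only [Complex.star_def, Complex.conj_I] at h2
    apply Complex.ext
    · exact h1
    · simpa [Complex.mul_re] using h2
  have hQu : Q u = 0 := by
    have := hzero (Q u)
    rwa [inner_self_eq_zero] at this
  have h2 : (adjoint T - T) u = 0 := by
    have : (Complex.I • (adjoint T - T)) u = 0 := hQdef ▸ hQu
    rw [ContinuousLinearMap.smul_apply, smul_eq_zero] at this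
    exact this.resolve_left (by simp [Complex.I_ne_zero])
  rw [ContinuousLinearMap.sub_apply, sub_eq_zero] at h2
  exact h2


lemma aux_isUnit_one_add {C : 𝓚 →L[ℂ] 𝓚} (hC : IsCompactOperator C)
    (hinj : ∀ x : 𝓚, x + C x = 0 → x = 0)
    (hadj : ∀ x : 𝓚, x + (adjoint C) x = 0 → x = 0) :
    IsUnit (1 + C) := by
  set f : 𝓚 →L[ℂ] 𝓚 := 1 + C with hf
  have hfapp : ∀ x, f x = x + C x := fun x => by
    rw [hf]; simp
  -- f is bounded below
  have hbdd : ∃ c : ℝ, 0 < c ∧ ∀ x, ‖x‖ ≤ c * ‖f x‖ := by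
    by_contra h
    push_neg at h
    obtain ⟨K, hKc, hKn⟩ := hC
    obtain ⟨ε, hε, hball⟩ := Metric.mem_nhds_iff.mp hKn
    have hseq : ∀ n : ℕ, ∃ x : 𝓚, ‖x‖ = ε / 2 ∧ ‖f x‖ < (ε / 2) / (n + 1) := by
      intro n
      obtain ⟨x, hx⟩ := h ((n : ℝ) + 1) (by positivity)
      have hx0 : x ≠ 0 := by
        intro h0
        rw [h0] at hx; simp at hx
      have hxn : ‖x‖ ≠ 0 := norm_ne_zero_iff.mpr hx0
      have hn : 0 < ‖x‖ := norm_pos_iff.mpr hx0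
      refine ⟨(((ε / 2) * ‖x‖⁻¹ : ℝ) : ℂ) • x, ?_, ?_⟩
      · rw [norm_smul, Complex.norm_real, Real.norm_eq_abs, abs_of_pos (by positivity)]
        field_simp
      · rw [map_smul, norm_smul, Complex.norm_real, Real.norm_eq_abs,
          abs_of_pos (by positivity)]
        have h2 : ‖f x‖ < ‖x‖ / ((n : ℝ) + 1) := by
          rw [lt_div_iff₀ (by positivity)]
          nlinarith [hx]
        have h3 : (ε/2) * ‖x‖⁻¹ * ‖f x‖ < (ε/2) * ‖x‖⁻¹ * (‖x‖ / ((n:ℝ)+1)) :=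
          mul_lt_mul_of_pos_left h2 (by positivity)
        have h4 : (ε/2) * ‖x‖⁻¹ * (‖x‖ / ((n:ℝ)+1)) = ε/2/((n:ℝ)+1) := by
          field_simp
        rw [h4] at h3
        exact h3
    choose x hx1 hx2 using hseq
    have hxK : ∀ n, C (x n) ∈ K := by
      intro n
      apply hball
      simp only [Metric.mem_ball, dist_zero_right, hx1 n]
      linarith
    obtain ⟨a, haK, φ, hφ, hconv⟩ := hKc.tendsto_subseq hxK
    have hf0 : Tendsto (fun n => f (x (φ n))) atTop (𝓝 0) := by
      rw [tendsto_zero_iff_norm_tendsto_zero]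
      apply squeeze_zero (fun n => norm_nonneg _)
        (fun n => le_of_lt (hx2 (φ n)))
      have h1 : Tendsto (fun n : ℕ => (ε/2) / ((n : ℝ) + 1)) atTop (𝓝 0) := by
        apply Tendsto.div_atTop tendsto_const_nhds
        exact tendsto_atTop_add_const_right atTop 1 tendsto_natCast_atTop_atTop
      exact h1.comp hφ.tendsto_atTop
    have hxconv : Tendsto (fun n => x (φ n)) atTop (𝓝 (-a)) := by
      have heq : (fun n => x (φ n)) = fun n => f (x (φ n)) - C (x (φ n)) := by
        ext n; rw [hfapp]; abel
      rw [heq]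
      simpa using hf0.sub hconv
    have hna : ‖(-a : 𝓚)‖ = ε / 2 := by
      have h1 : Tendsto (fun n => ‖x (φ n)‖) atTop (𝓝 ‖(-a : 𝓚)‖) := hxconv.norm
      have h2 : (fun n => ‖x (φ n)‖) = fun _ => ε / 2 := by ext n; exact hx1 (φ n)
      rw [h2] at h1
      exact (tendsto_const_nhds_iff.mp h1).symm
    have hfa : f (-a) = 0 := by
      have h1 : Tendsto (fun n => f (x (φ n))) atTop (𝓝 (f (-a))) :=
        (f.continuous.tendsto _).comp hxconv
      exact tendsto_nhds_unique h1 hf0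
    have : (-a : 𝓚) = 0 := hinj _ (by rw [← hfapp]; exact hfa)
    rw [this] at hna
    simp at hna
    linarith
  obtain ⟨c, hc, hlow⟩ := hbdd
  -- closed range
  have hanti : AntilipschitzWith c.toNNReal f :=
    f.antilipschitz_of_bound (by
      intro x
      rw [Real.coe_toNNReal c hc.le]
      exact hlow x)
  have hclosed : IsClosed (Set.range f) := hanti.isClosed_range f.uniformContinuous
  have hker : LinearMap.ker (f : 𝓚 →ₗ[ℂ] 𝓚) = ⊥ := by
    rw [LinearMap.ker_eq_bot']
    intro x hx
    exact hinj x (by rw [← hfapp]; exact hx)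
  have hrange : LinearMap.range (f : 𝓚 →ₗ[ℂ] 𝓚) = ⊤ := by
    set Rng : Submodule ℂ 𝓚 := LinearMap.range (f : 𝓚 →ₗ[ℂ] 𝓚) with hR
    have hclosed' : IsClosed (Rng : Set 𝓚) := by
      have : (Rng : Set 𝓚) = Set.range f := by
        ext y; simp [hR, LinearMap.mem_range, Set.mem_range]
      rw [this]; exact hclosed
    haveI : CompleteSpace Rng := hclosed'.completeSpace_coe
    rw [← Submodule.orthogonal_eq_bot_iff (K := Rng)]
    rw [Submodule.eq_bot_iff]
    intro y hy
    rw [Submodule.mem_orthogonal] at hy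
    have hy' : ∀ x : 𝓚, (inner ℂ ((adjoint f) y) x : ℂ) = 0 := by
      intro x
      rw [adjoint_inner_left]
      rw [← inner_conj_symm]
      rw [hy (f x) (LinearMap.mem_range.mpr ⟨x, rfl⟩)]
      simp
    have hfy : (adjoint f) y = 0 := by
      have := hy' ((adjoint f) y)
      rwa [inner_self_eq_zero] at this
    have hadjf : adjoint f = 1 + adjoint C := by
      rw [hf, ← ContinuousLinearMap.star_eq_adjoint, star_add, star_one,
        ContinuousLinearMap.star_eq_adjoint]
    apply hadj
    rw [hadjf] at hfy
    simpa using hfy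
  set e := ContinuousLinearEquiv.ofBijective f hker hrange with he
  have hecoe : ⇑e = ⇑f := ContinuousLinearEquiv.coeFn_ofBijective f hker hrange
  refine ⟨⟨f, (e.symm : 𝓚 →L[ℂ] 𝓚), ?_, ?_⟩, rfl⟩
  · rw [ContinuousLinearMap.mul_def]
    ext x
    simp only [ContinuousLinearMap.coe_comp', Function.comp_apply,
      ContinuousLinearEquiv.coe_coe, ContinuousLinearMap.one_apply]
    rw [← hecoe]
    exact e.apply_symm_apply x
  · rw [ContinuousLinearMap.mul_def]
    ext x
    simp only [ContinuousLinearMap.coe_comp', Function.comp_apply,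
      ContinuousLinearEquiv.coe_coe, ContinuousLinearMap.one_apply]
    rw [← hecoe]
    exact e.symm_apply_apply x


lemma aux_sa_inner_im_zero' {E : Type*} [NormedAddCommGroup E] [InnerProductSpace ℂ E]
    [CompleteSpace E] {A : E →L[ℂ] E} (hA : IsSelfAdjoint A) (x : E) :
    (inner ℂ x (A x) : ℂ).im = 0 := by
  have h := aux_sa_inner_im_zero hA x
  rw [← inner_conj_symm, Complex.conj_im, h, neg_zero]


lemma aux_exists_good_s (T J : 𝓚 →L[ℂ] 𝓚) (hT : IsCompactOperator T) (hJ : IsSelfAdjoint J)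
    (hpos : ∀ w : 𝓚, 0 ≤ (inner ℂ w (T w) : ℂ).im) (r₀ : ℝ) :
    ∃ s : ℝ, IsUnit (1 + T * ((s : ℂ) • (1 : 𝓚 →L[ℂ] 𝓚) - (r₀ : ℂ) • J)) := by
  set M : ℝ → (𝓚 →L[ℂ] 𝓚) := fun s => (r₀ : ℂ) • J - (s : ℂ) • 1 with hMdef
  set Kk : ℝ → (𝓚 →L[ℂ] 𝓚) := fun s => (s : ℂ) • 1 - (r₀ : ℂ) • J with hKdef
  have hMsa : ∀ s : ℝ, IsSelfAdjoint (M s) := by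
    intro s
    have : star (M s) = M s := by
      simp only [hMdef, star_sub, star_smul, star_one, hJ.star_eq, Complex.star_def,
        Complex.conj_ofReal]
    exact this
  have hKsa : ∀ s : ℝ, IsSelfAdjoint (Kk s) := by
    intro s
    have : star (Kk s) = Kk s := by
      simp only [hKdef, star_sub, star_smul, star_one, hJ.star_eq, Complex.star_def,
        Complex.conj_ofReal]
    exact this
  have hMK : ∀ (s : ℝ) (x : 𝓚), M s x = -(Kk s x) := by
    intro s x
    simp only [hMdef, hKdef, ContinuousLinearMap.sub_apply, ContinuousLinearMap.smul_apply,
      ContinuousLinearMap.one_apply]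
    abel
  set Bad : ℝ → Prop := fun s => ∃ v : 𝓚, ‖v‖ = 1 ∧ adjoint T v = T v ∧ v = M s (T v)
    with hBadDef
  -- Claim A : if not bad then unit
  have claimA : ∀ s : ℝ, ¬ Bad s → IsUnit (1 + T * Kk s) := by
    intro s hnb
    have hcpt : IsCompactOperator ⇑(T * Kk s) := by
      rw [ContinuousLinearMap.mul_def]
      exact hT.comp_clm (Kk s)
    apply aux_isUnit_one_add hcpt
    · -- injectivity
      intro x hx
      by_contra hx0
      rw [ContinuousLinearMap.mul_apply] at hx
      have h1 : T (Kk s x) = -x := eq_neg_of_add_eq_zero_right hx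
      have hxT : x = T (M s x) := by
        rw [hMK s x, map_neg, h1, neg_neg]
      have hu0 : M s x ≠ 0 := by
        intro h0
        apply hx0
        rw [hxT, h0, map_zero]
      have him : (inner ℂ (M s x) (T (M s x)) : ℂ).im = 0 := by
        rw [← hxT]
        exact aux_sa_inner_im_zero (hMsa s) x
      have hTu : adjoint T (M s x) = T (M s x) := aux_adjoint_apply_eq hpos him
      apply hnb
      rw [hBadDef]
      refine ⟨((‖M s x‖⁻¹ : ℝ) : ℂ) • (M s x), ?_, ?_, ?_⟩
      · rw [norm_smul, Complex.norm_real, Real.norm_eq_abs,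
          abs_of_pos (inv_pos.mpr (norm_pos_iff.mpr hu0))]
        field_simp
      · rw [map_smul, map_smul, hTu]
      · rw [map_smul, map_smul, ← hxT]
    · -- adjoint injectivity
      intro x hx
      by_contra hx0
      have hadjTK : adjoint (T * Kk s) = Kk s * adjoint T := by
        rw [ContinuousLinearMap.mul_def, adjoint_comp, (hKsa s).adjoint_eq,
          ← ContinuousLinearMap.mul_def]
      rw [hadjTK, ContinuousLinearMap.mul_apply] at hx
      have h1 : Kk s ((adjoint T) x) = -x := eq_neg_of_add_eq_zero_right hx
      have hxT : x = M s ((adjoint T) x) := by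
        rw [hMK s _, h1, neg_neg]
      have him : (inner ℂ x (T x) : ℂ).im = 0 := by
        have e1 : (inner ℂ x (T x) : ℂ) = inner ℂ ((adjoint T) x) x :=
          (ContinuousLinearMap.adjoint_inner_left T x x).symm
        rw [e1]
        have e2 : (inner ℂ ((adjoint T) x) x : ℂ)
            = inner ℂ ((adjoint T) x) (M s ((adjoint T) x)) := by rw [← hxT]
        rw [e2]
        exact aux_sa_inner_im_zero' (hMsa s) ((adjoint T) x)
      have hTx : adjoint T x = T x := aux_adjoint_apply_eq hpos him
      apply hnb
      rw [hBadDef]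
      have hxT' : x = M s (T x) := by rw [← hTx]; exact hxT
      refine ⟨((‖x‖⁻¹ : ℝ) : ℂ) • x, ?_, ?_, ?_⟩
      · rw [norm_smul, Complex.norm_real, Real.norm_eq_abs,
          abs_of_pos (inv_pos.mpr (norm_pos_iff.mpr hx0))]
        field_simp
      · rw [map_smul, map_smul, hTx]
      · rw [map_smul, map_smul, ← hxT']
  -- Claim B : some s of the form 1/(n+1) is not bad
  by_contra hcon
  push_neg at hcon
  have hbad : ∀ n : ℕ, Bad (1 / ((n : ℝ) + 1)) := by
    intro n
    by_contra hnb
    exact hcon _ (claimA _ hnb)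
  set sq : ℕ → ℝ := fun n => 1 / ((n : ℝ) + 1) with hsq
  have hsq_pos : ∀ n, 0 < sq n := fun n => by positivity
  have hsq_le : ∀ n, sq n ≤ 1 := by
    intro n
    rw [hsq]
    rw [div_le_one (by positivity)]
    simp
  have hsq_inj : Function.Injective sq := by
    intro n m h
    rw [hsq] at h
    have hn : ((n:ℝ)+1) ≠ 0 := by positivity
    have hm : ((m:ℝ)+1) ≠ 0 := by positivity
    field_simp at h
    exact_mod_cast add_right_cancel h.symm
  choose v hv1 hv2 hv3 using fun n => hbad n
  set w : ℕ → 𝓚 := fun n => T (v n) with hwdef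
  have hCpos : (0:ℝ) < |r₀| * ‖J‖ + 1 := by positivity
  have hMnorm : ∀ n, ‖M (sq n)‖ ≤ |r₀| * ‖J‖ + 1 := by
    intro n
    refine le_trans (norm_sub_le _ _) ?_
    have h1 : ‖(r₀ : ℂ) • J‖ = |r₀| * ‖J‖ := by
      rw [norm_smul, Complex.norm_real, Real.norm_eq_abs]
    have h2 : ‖(sq n : ℂ) • (1 : 𝓚 →L[ℂ] 𝓚)‖ ≤ 1 := by
      rw [norm_smul, Complex.norm_real, Real.norm_eq_abs,
        abs_of_pos (hsq_pos n)]
      calc sq n * ‖(1 : 𝓚 →L[ℂ] 𝓚)‖ ≤ 1 * 1 := by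
            apply mul_le_mul (hsq_le n) ?_ (norm_nonneg _) zero_le_one
            rw [ContinuousLinearMap.one_def]
            exact ContinuousLinearMap.norm_id_le
        _ = 1 := one_mul 1
    linarith
  have hwlow : ∀ n, 1 ≤ (|r₀| * ‖J‖ + 1) * ‖w n‖ := by
    intro n
    calc (1:ℝ) = ‖v n‖ := (hv1 n).symm
      _ = ‖M (sq n) (w n)‖ := by rw [← hv3 n]
      _ ≤ ‖M (sq n)‖ * ‖w n‖ := ContinuousLinearMap.le_opNorm _ _
      _ ≤ (|r₀| * ‖J‖ + 1) * ‖w n‖ :=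
          mul_le_mul_of_nonneg_right (hMnorm n) (norm_nonneg _)
  set δ : ℝ := 1 / (|r₀| * ‖J‖ + 1) with hδdef
  have hδpos : 0 < δ := by positivity
  have hwδ : ∀ n, δ ≤ ‖w n‖ := by
    intro n
    rw [hδdef, div_le_iff₀ hCpos]
    calc (1:ℝ) ≤ (|r₀| * ‖J‖ + 1) * ‖w n‖ := hwlow n
      _ = ‖w n‖ * (|r₀| * ‖J‖ + 1) := mul_comm _ _
  have horth : ∀ n m, n ≠ m → (inner ℂ (w n) (w m) : ℂ) = 0 := by
    intro n m hnm
    have e1 : (inner ℂ (v n) (w m) : ℂ) = inner ℂ (w n) (M (sq n) (w m)) := by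
      conv_lhs => rw [hv3 n]
      conv_lhs => rw [← (hMsa (sq n)).adjoint_eq]
      exact ContinuousLinearMap.adjoint_inner_left _ _ _
    have e2 : (inner ℂ (v n) (w m) : ℂ) = inner ℂ (w n) (M (sq m) (w m)) := by
      calc (inner ℂ (v n) (w m) : ℂ) = inner ℂ (v n) (T (v m)) := rfl
        _ = inner ℂ ((adjoint T) (v n)) (v m) :=
            (ContinuousLinearMap.adjoint_inner_left T (v m) (v n)).symm
        _ = inner ℂ (w n) (v m) := by rw [hv2 n]
        _ = inner ℂ (w n) (M (sq m) (w m)) := by conv_lhs => rw [hv3 m]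
    have e3 : M (sq n) (w m) - M (sq m) (w m) = ((sq m : ℂ) - (sq n : ℂ)) • (w m) := by
      simp only [hMdef, ContinuousLinearMap.sub_apply, ContinuousLinearMap.smul_apply,
        ContinuousLinearMap.one_apply, sub_smul]
      abel
    have e4 : ((sq m : ℂ) - (sq n : ℂ)) * inner ℂ (w n) (w m) = 0 := by
      rw [← inner_smul_right, ← e3, inner_sub_right, ← e1, ← e2, sub_self]
    have hne : ((sq m : ℂ) - (sq n : ℂ)) ≠ 0 := by
      rw [sub_ne_zero]
      intro h
      exact hnm (hsq_inj (by exact_mod_cast h.symm))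
    exact (mul_eq_zero.mp e4).resolve_left hne
  obtain ⟨Kc, hKc, hKn⟩ := hT
  obtain ⟨ε, hε, hball⟩ := Metric.mem_nhds_iff.mp hKn
  have hxK : ∀ n, T (((ε/2 : ℝ) : ℂ) • v n) ∈ Kc := by
    intro n
    apply hball
    simp only [Metric.mem_ball, dist_zero_right, norm_smul, Complex.norm_real,
      Real.norm_eq_abs, hv1 n, mul_one, abs_of_pos (by positivity : (0:ℝ) < ε/2)]
    linarith
  obtain ⟨a, haK, φ, hφ, hconv⟩ := hKc.tendsto_subseq hxK
  have hcauchy : CauchySeq (fun n => T (((ε/2:ℝ):ℂ) • v (φ n))) := hconv.cauchySeq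
  rw [Metric.cauchySeq_iff] at hcauchy
  obtain ⟨N, hN⟩ := hcauchy ((ε/2) * δ) (by positivity)
  have hd := hN (N+1) (by omega) N (le_refl N)
  have hneq : φ (N+1) ≠ φ N := fun h => by simpa using hφ.injective h
  have hTs : ∀ n, T (((ε/2:ℝ):ℂ) • v n) = ((ε/2:ℝ):ℂ) • w n := fun n => map_smul T _ _
  rw [hTs, hTs, dist_eq_norm, ← smul_sub, norm_smul, Complex.norm_real,
    Real.norm_eq_abs, abs_of_pos (by positivity : (0:ℝ) < ε/2)] at hd
  have hdlt : ‖w (φ (N+1)) - w (φ N)‖ < δ := by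
    have := lt_of_mul_lt_mul_left hd (by positivity : (0:ℝ) ≤ ε/2)
    exact this
  have hsq2 : ‖w (φ (N+1)) - w (φ N)‖ ^ 2
      = ‖w (φ (N+1))‖ ^ 2 + ‖w (φ N)‖ ^ 2 := by
    rw [norm_sub_sq (𝕜 := ℂ)]
    have : (inner ℂ (w (φ (N+1))) (w (φ N)) : ℂ) = 0 := horth _ _ hneq
    rw [this]
    simp
  have h1 := hwδ (φ (N+1))
  have h2 := hwδ (φ N)
  nlinarith [norm_nonneg (w (φ (N+1)) - w (φ N)), hδpos, hdlt, hsq2, h1, h2]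


lemma aux_pert (F : 𝓗 →L[ℂ] 𝓚) (A : 𝓗 →L[ℂ] 𝓗) (K : 𝓚 →L[ℂ] 𝓚) {z : ℂ}
    (h1 : IsUnit (A - z • (1 : 𝓗 →L[ℂ] 𝓗)))
    (h2 : IsUnit (A + (adjoint F) ∘L (K ∘L F) - z • (1 : 𝓗 →L[ℂ] 𝓗))) :
    IsUnit (1 + Tz F A z * K) ∧
      Tz F (A + (adjoint F) ∘L (K ∘L F)) z
        = Ring.inverse (1 + Tz F A z * K) * Tz F A z := by
  set B : 𝓗 →L[ℂ] 𝓗 := A + (adjoint F) ∘L (K ∘L F) with hB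
  set R : 𝓗 →L[ℂ] 𝓗 := Ring.inverse (A - z • (1 : 𝓗 →L[ℂ] 𝓗)) with hRdef
  set G : 𝓗 →L[ℂ] 𝓗 := Ring.inverse (B - z • (1 : 𝓗 →L[ℂ] 𝓗)) with hGdef
  have hRl : ∀ v, R ((A - z • (1 : 𝓗 →L[ℂ] 𝓗)) v) = v := by
    intro v
    calc R ((A - z • (1 : 𝓗 →L[ℂ] 𝓗)) v) = (R * (A - z • (1 : 𝓗 →L[ℂ] 𝓗))) v := rfl
      _ = v := by rw [Ring.inverse_mul_cancel _ h1]; rfl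
  have hRr : ∀ v, (A - z • (1 : 𝓗 →L[ℂ] 𝓗)) (R v) = v := by
    intro v
    calc (A - z • (1 : 𝓗 →L[ℂ] 𝓗)) (R v) = ((A - z • (1 : 𝓗 →L[ℂ] 𝓗)) * R) v := rfl
      _ = v := by rw [Ring.mul_inverse_cancel _ h1]; rfl
  have hGl : ∀ v, G ((B - z • (1 : 𝓗 →L[ℂ] 𝓗)) v) = v := by
    intro v
    calc G ((B - z • (1 : 𝓗 →L[ℂ] 𝓗)) v) = (G * (B - z • (1 : 𝓗 →L[ℂ] 𝓗))) v := rfl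
      _ = v := by rw [Ring.inverse_mul_cancel _ h2]; rfl
  have hGr : ∀ v, (B - z • (1 : 𝓗 →L[ℂ] 𝓗)) (G v) = v := by
    intro v
    calc (B - z • (1 : 𝓗 →L[ℂ] 𝓗)) (G v) = ((B - z • (1 : 𝓗 →L[ℂ] 𝓗)) * G) v := rfl
      _ = v := by rw [Ring.mul_inverse_cancel _ h2]; rfl
  set T1 : 𝓚 →L[ℂ] 𝓚 := Tz F A z with hT1def
  set T2 : 𝓚 →L[ℂ] 𝓚 := Tz F B z with hT2def
  have hT1 : ∀ u, T1 u = F (R ((adjoint F) u)) := fun u => rfl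
  have hT2 : ∀ u, T2 u = F (G ((adjoint F) u)) := fun u => rfl
  have hBapp : ∀ v, (B - z • (1 : 𝓗 →L[ℂ] 𝓗)) v
      = (A - z • (1 : 𝓗 →L[ℂ] 𝓗)) v + (adjoint F) (K (F v)) := by
    intro v
    simp [hB, ContinuousLinearMap.sub_apply, ContinuousLinearMap.add_apply,
      ContinuousLinearMap.comp_apply]
    abel
  have key1 : ∀ v, R v - G v = R ((adjoint F) (K (F (G v)))) := by
    intro v
    have e1 : (A - z • (1 : 𝓗 →L[ℂ] 𝓗)) (G v) + (adjoint F) (K (F (G v))) = v := by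
      rw [← hBapp]; exact hGr v
    have e2 := congrArg R e1
    rw [map_add, hRl] at e2
    rw [← e2]
    abel
  have key2 : ∀ v, R v - G v = G ((adjoint F) (K (F (R v)))) := by
    intro v
    have e1 : (B - z • (1 : 𝓗 →L[ℂ] 𝓗)) (R v) - (adjoint F) (K (F (R v))) = v := by
      rw [hBapp, hRr]; abel
    have e2 := congrArg G e1
    rw [map_sub, hGl] at e2
    rw [← e2]
    abel
  have id1 : ∀ u, T1 u - T2 u = T1 (K (T2 u)) := by
    intro u
    rw [hT1, hT2, ← map_sub, key1 ((adjoint F) u)]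
    exact (hT1 _).symm
  have id2 : ∀ u, T1 u - T2 u = T2 (K (T1 u)) := by
    intro u
    rw [hT1, hT2, ← map_sub, key2 ((adjoint F) u)]
    exact (hT2 _).symm
  have hu : (1 + T1 * K) * (1 - T2 * K) = 1 := by
    ext u
    have expand : ((1 + T1 * K) * (1 - T2 * K)) u
        = u - T2 (K u) + (T1 (K u) - T1 (K (T2 (K u)))) := by
      simp only [ContinuousLinearMap.mul_apply, ContinuousLinearMap.add_apply,
        ContinuousLinearMap.sub_apply, ContinuousLinearMap.one_apply, map_sub]
      abel
    rw [expand]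
    have := id1 (K u)
    rw [ContinuousLinearMap.one_apply]
    have h3 : T1 (K (T2 (K u))) = T1 (K u) - T2 (K u) := (id1 (K u)).symm
    rw [h3]
    abel
  have hv : (1 - T2 * K) * (1 + T1 * K) = 1 := by
    ext u
    have expand : ((1 - T2 * K) * (1 + T1 * K)) u
        = u + T1 (K u) - (T2 (K u) + T2 (K (T1 (K u)))) := by
      simp only [ContinuousLinearMap.mul_apply, ContinuousLinearMap.add_apply,
        ContinuousLinearMap.sub_apply, ContinuousLinearMap.one_apply, map_add]
      abel
    rw [expand]
    rw [ContinuousLinearMap.one_apply]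
    have h3 : T2 (K (T1 (K u))) = T1 (K u) - T2 (K u) := (id2 (K u)).symm
    rw [h3]
    abel
  have hUnit : IsUnit (1 + T1 * K) := ⟨⟨1 + T1 * K, 1 - T2 * K, hu, hv⟩, rfl⟩
  refine ⟨hUnit, ?_⟩
  have hinv : Ring.inverse (1 + T1 * K) = 1 - T2 * K := by
    have h4 := Ring.inverse_mul_cancel _ hUnit
    calc Ring.inverse (1 + T1 * K)
        = Ring.inverse (1 + T1 * K) * 1 := (mul_one _).symm
      _ = Ring.inverse (1 + T1 * K) * ((1 + T1 * K) * (1 - T2 * K)) := by rw [hu]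
      _ = (Ring.inverse (1 + T1 * K) * (1 + T1 * K)) * (1 - T2 * K) := by rw [mul_assoc]
      _ = 1 - T2 * K := by rw [h4, one_mul]
  rw [hinv]
  ext u
  have expand : ((1 - T2 * K) * T1) u = T1 u - T2 (K (T1 u)) := by
    simp only [ContinuousLinearMap.mul_apply, ContinuousLinearMap.sub_apply,
      ContinuousLinearMap.one_apply]
  rw [expand]
  have h3 : T2 (K (T1 u)) = T1 u - T2 u := (id2 u).symm
  rw [h3]
  abel


lemma aux_sa_comp (F : 𝓗 →L[ℂ] 𝓚) {X : 𝓚 →L[ℂ] 𝓚} (hX : IsSelfAdjoint X) :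
    IsSelfAdjoint ((adjoint F) ∘L (X ∘L F)) := by
  have : star ((adjoint F) ∘L (X ∘L F)) = (adjoint F) ∘L (X ∘L F) := by
    rw [ContinuousLinearMap.star_eq_adjoint, adjoint_comp, adjoint_comp, adjoint_adjoint,
      hX.adjoint_eq, ContinuousLinearMap.comp_assoc]
  exact this

lemma aux_sa_real_smul {X : 𝓗 →L[ℂ] 𝓗} (hX : IsSelfAdjoint X) (r : ℝ) :
    IsSelfAdjoint ((r : ℂ) • X) := by
  have : star ((r : ℂ) • X) = (r : ℂ) • X := by
    rw [star_smul, hX.star_eq, Complex.star_def, Complex.conj_ofReal]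
  exact this

/-- If `λ` is semi-regular for `H₀` (some direction `F*JF` is `λ`-regular), then the
direction `F*F` is `λ`-regular. -/
theorem FstarF_regular_of_semiRegular
    (H₀ : 𝓗 →L[ℂ] 𝓗) (hH₀ : IsSelfAdjoint H₀)
    (F : 𝓗 →L[ℂ] 𝓚) (hF : IsCompactOperator F) (lam : ℝ)
    (hsemi : ∃ J : 𝓚 →L[ℂ] 𝓚, IsSelfAdjoint J ∧
      ∃ r : ℝ, NormLimitExists F (H₀ + (r : ℂ) • ((adjoint F) ∘L J ∘L F)) lam) :
    ∃ r : ℝ, NormLimitExists F (H₀ + (r : ℂ) • ((adjoint F) ∘L F)) lam := by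
  obtain ⟨J, hJ, r₀, T, hTlim⟩ := hsemi
  set H₁ : 𝓗 →L[ℂ] 𝓗 := H₀ + (r₀ : ℂ) • ((adjoint F) ∘L J ∘L F) with hH₁
  have hH₁sa : IsSelfAdjoint H₁ :=
    hH₀.add (aux_sa_real_smul (aux_sa_comp F hJ) r₀)
  have him : ∀ y : ℝ, y ∈ Ioi (0:ℝ) → ((lam : ℂ) + y * Complex.I).im = y := by
    intro y _; simp
  -- T is compact
  have hTcpt : IsCompactOperator T := by
    apply isCompactOperator_of_tendsto hTlim
    apply Eventually.of_forall
    intro y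
    exact hF.comp_clm _
  -- positivity of the limit
  have hpos : ∀ w : 𝓚, 0 ≤ (inner ℂ w (T w) : ℂ).im := by
    intro u
    have happly : Continuous fun S : 𝓚 →L[ℂ] 𝓚 => S u :=
      (ContinuousLinearMap.apply ℂ 𝓚 u).continuous
    have hΦ : Continuous fun S : 𝓚 →L[ℂ] 𝓚 => ((inner ℂ u (S u) : ℂ)).im :=
      Complex.continuous_im.comp (Continuous.inner continuous_const happly)
    have hconv : Tendsto
        (fun y : ℝ => ((inner ℂ u ((Tz F H₁ ((lam : ℂ) + y * Complex.I)) u) : ℂ)).im)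
        (𝓝[>] 0) (𝓝 ((inner ℂ u (T u) : ℂ)).im) :=
      (hΦ.continuousAt.tendsto).comp hTlim
    refine ge_of_tendsto hconv ?_
    apply eventually_nhdsWithin_of_forall
    intro y hy
    exact aux_Tz_im_nonneg hH₁sa F (by rw [him y hy]; exact hy) u
  -- a good real direction s
  obtain ⟨s, hUnit⟩ := aux_exists_good_s T J hTcpt hJ hpos r₀
  set Kk : 𝓚 →L[ℂ] 𝓚 := (s : ℂ) • (1 : 𝓚 →L[ℂ] 𝓚) - (r₀ : ℂ) • J with hKk
  have hH₂eq : H₁ + (adjoint F) ∘L (Kk ∘L F) = H₀ + (s : ℂ) • ((adjoint F) ∘L F) := by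
    ext x
    simp only [hH₁, hKk, ContinuousLinearMap.add_apply, ContinuousLinearMap.comp_apply,
      ContinuousLinearMap.smul_apply, ContinuousLinearMap.sub_apply,
      ContinuousLinearMap.one_apply, map_sub, map_smul]
    abel
  have hH₂sa : IsSelfAdjoint (H₀ + (s : ℂ) • ((adjoint F) ∘L F)) := by
    apply hH₀.add
    apply aux_sa_real_smul _ s
    have h1 : (adjoint F) ∘L F = (adjoint F) ∘L ((1 : 𝓚 →L[ℂ] 𝓚) ∘L F) := by
      ext x; simp
    rw [h1]
    exact aux_sa_comp F (star_one _)
  -- the identity along the approach to the real axis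
  have hkey : ∀ y : ℝ, y ∈ Ioi (0:ℝ) →
      Tz F (H₀ + (s : ℂ) • ((adjoint F) ∘L F)) ((lam : ℂ) + y * Complex.I)
        = Ring.inverse (1 + Tz F H₁ ((lam : ℂ) + y * Complex.I) * Kk)
            * Tz F H₁ ((lam : ℂ) + y * Complex.I) := by
    intro y hy
    have hzim : ((lam : ℂ) + y * Complex.I).im ≠ 0 := by
      rw [him y hy]; exact ne_of_gt hy
    have h1 := aux_isUnit_sub hH₁sa hzim
    have h2 : IsUnit (H₁ + (adjoint F) ∘L (Kk ∘L F)
        - ((lam : ℂ) + y * Complex.I) • (1 : 𝓗 →L[ℂ] 𝓗)) := by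
      rw [hH₂eq]
      exact aux_isUnit_sub hH₂sa hzim
    have := (aux_pert F H₁ Kk h1 h2).2
    rw [hH₂eq] at this
    exact this
  refine ⟨s, Ring.inverse (1 + T * Kk) * T, ?_⟩
  -- continuity of X ↦ (1 + X Kk)⁻¹ X at T
  have hcont1 : Continuous fun X : 𝓚 →L[ℂ] 𝓚 => 1 + X * Kk :=
    continuous_const.add (continuous_id.mul continuous_const)
  have hcont2 : ContinuousAt Ring.inverse (1 + T * Kk) := by
    have := NormedRing.inverse_continuousAt hUnit.unit
    rwa [IsUnit.unit_spec] at this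
  have t1 : Tendsto (fun y : ℝ => 1 + Tz F H₁ ((lam : ℂ) + y * Complex.I) * Kk)
      (𝓝[>] 0) (𝓝 (1 + T * Kk)) :=
    (hcont1.tendsto T).comp hTlim
  have t2 : Tendsto (fun y : ℝ => Ring.inverse (1 + Tz F H₁ ((lam : ℂ) + y * Complex.I) * Kk))
      (𝓝[>] 0) (𝓝 (Ring.inverse (1 + T * Kk))) :=
    hcont2.tendsto.comp t1
  have htend : Tendsto
      (fun y : ℝ => Ring.inverse (1 + Tz F H₁ ((lam : ℂ) + y * Complex.I) * Kk)
        * Tz F H₁ ((lam : ℂ) + y * Complex.I))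
      (𝓝[>] 0) (𝓝 (Ring.inverse (1 + T * Kk) * T)) :=
    t2.mul hTlim
  apply htend.congr'
  apply eventually_nhdsWithin_of_forall
  intro y hy
  exact (hkey y hy).symm
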